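/- Let n = 3 and define q = ‖P̄₁P̄₂P̄₁‖ where P₁ = |001⟩⟨001| + |010⟩⟨010| + |100⟩⟨100|, P₂ = Σ_{x∈{0,1}²} |α_x⟩⟨α_x| ⊗ |β_x⟩⟨β_x| (with |α_x⟩, |β_x⟩ as in the W-state verification protocol for n = 3), and P̄ᵢ = Pᵢ − |W₃⟩⟨W₃| with |W₃⟩ = (|001⟩+|010⟩+|100⟩)/√3. Then q = 2/5. -/

import Mathlib

open Matrix
open scoped Matrix.Norms.L2Operator

open Matrix

noncomputable def h (n : ℕ) : ℝ :=
  (∑ j ∈ Finset.range (n + 1), (n.choose j : ℝ) / (1 + ((n : ℝ) - 2 * j) ^ 2)) / 2 ^ n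

/-- Hamming weight of a bit string. -/
def wt {m : ℕ} (x : Fin m → Fin 2) : ℕ := ∑ i, (x i).val

/-- Basis index for `(ℂ²)^{⊗n}`, split as the first `n-1` qubits and the last qubit. -/
abbrev Idx (n : ℕ) := (Fin (n - 1) → Fin 2) × Fin 2

/-- The test projector `P₁` (Pauli-Z test for the W state). -/
def P1 (n : ℕ) : Matrix (Idx n) (Idx n) ℂ :=
  fun p q => if p = q ∧ wt p.1 + (p.2 : ℕ) = 1 then 1 else 0

/-- The vector `|α_x⟩`. -/
noncomputable def alpha (n : ℕ) (x y : Fin (n - 1) → Fin 2) : ℂ :=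
  (-1 : ℂ) ^ (∑ i, (x i : ℕ) * (y i : ℕ)) / (Real.sqrt (2 ^ (n - 1)) : ℝ)

/-- The vector `|β_x⟩`. -/
noncomputable def beta (n : ℕ) (x : Fin (n - 1) → Fin 2) (b : Fin 2) : ℂ :=
  (if b = 1 then 1 else ((n : ℂ) - 1 - 2 * (wt x : ℕ))) /
    (Real.sqrt (1 + ((n : ℝ) - 1 - 2 * (wt x : ℕ)) ^ 2) : ℝ)

/-- The test projector `P₂ = Σ_x |α_x⟩⟨α_x| ⊗ |β_x⟩⟨β_x|`. -/
noncomputable def P2 (n : ℕ) : Matrix (Idx n) (Idx n) ℂ :=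
  fun p q => ∑ x : Fin (n - 1) → Fin 2,
    alpha n x p.1 * star (alpha n x q.1) * (beta n x p.2 * star (beta n x q.2))


/-- The `n`-qubit W state as a vector in `(ℂ²)^{⊗n}`. -/
noncomputable def Wstate (n : ℕ) : Idx n → ℂ :=
  fun p => if wt p.1 + (p.2 : ℕ) = 1 then (1 / Real.sqrt n : ℝ) else 0

/-- The rank-one projector `|W_n⟩⟨W_n|`. -/
noncomputable def projW (n : ℕ) : Matrix (Idx n) (Idx n) ℂ :=
  fun p q => Wstate n p * star (Wstate n q)

/- ################ auxiliary development ################ -/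

/-- code of an index -/
def code (p : Idx 3) : ℕ := 4 * (p.1 0).val + 2 * (p.1 1).val + (p.2).val

noncomputable def btab (i j : ℕ) : ℝ :=
  if i = 0 then (if j = 0 then (2/5:ℝ) else if j = 1 then (0:ℝ) else if j = 2 then (0:ℝ) else if j = 3 then (1/5:ℝ) else if j = 4 then (0:ℝ) else if j = 5 then (1/5:ℝ) else if j = 6 then (2/5:ℝ) else (0:ℝ)) else
  if i = 1 then (if j = 0 then (0:ℝ) else if j = 1 then (4/15:ℝ) else if j = 2 then (-2/15:ℝ) else if j = 3 then (0:ℝ) else if j = 4 then (-2/15:ℝ) else if j = 5 then (0:ℝ) else if j = 6 then (0:ℝ) else (-2/5:ℝ)) else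
  if i = 2 then (if j = 0 then (0:ℝ) else if j = 1 then (-2/15:ℝ) else if j = 2 then (1/15:ℝ) else if j = 3 then (0:ℝ) else if j = 4 then (1/15:ℝ) else if j = 5 then (0:ℝ) else if j = 6 then (0:ℝ) else (1/5:ℝ)) else
  if i = 3 then (if j = 0 then (1/5:ℝ) else if j = 1 then (0:ℝ) else if j = 2 then (0:ℝ) else if j = 3 then (3/5:ℝ) else if j = 4 then (0:ℝ) else if j = 5 then (-2/5:ℝ) else if j = 6 then (1/5:ℝ) else (0:ℝ)) else
  if i = 4 then (if j = 0 then (0:ℝ) else if j = 1 then (-2/15:ℝ) else if j = 2 then (1/15:ℝ) else if j = 3 then (0:ℝ) else if j = 4 then (1/15:ℝ) else if j = 5 then (0:ℝ) else if j = 6 then (0:ℝ) else (1/5:ℝ)) else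
  if i = 5 then (if j = 0 then (1/5:ℝ) else if j = 1 then (0:ℝ) else if j = 2 then (0:ℝ) else if j = 3 then (-2/5:ℝ) else if j = 4 then (0:ℝ) else if j = 5 then (3/5:ℝ) else if j = 6 then (1/5:ℝ) else (0:ℝ)) else
  if i = 6 then (if j = 0 then (2/5:ℝ) else if j = 1 then (0:ℝ) else if j = 2 then (0:ℝ) else if j = 3 then (1/5:ℝ) else if j = 4 then (0:ℝ) else if j = 5 then (1/5:ℝ) else if j = 6 then (2/5:ℝ) else (0:ℝ)) else
  if i = 7 then (if j = 0 then (0:ℝ) else if j = 1 then (-2/5:ℝ) else if j = 2 then (1/5:ℝ) else if j = 3 then (0:ℝ) else if j = 4 then (1/5:ℝ) else if j = 5 then (0:ℝ) else if j = 6 then (0:ℝ) else (3/5:ℝ)) else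
  0

noncomputable def Bmat : Matrix (Idx 3) (Idx 3) ℂ := fun p q => ((btab (code p) (code q) : ℝ) : ℂ)

noncomputable def Amat : Matrix (Idx 3) (Idx 3) ℂ := fun p q =>
  if wt p.1 + (p.2 : ℕ) = 1 ∧ wt q.1 + (q.2 : ℕ) = 1 then
    (if code p = code q then ((2/3 : ℝ) : ℂ) else ((-1/3 : ℝ) : ℂ)) else 0

noncomputable def uvec (p : Idx 3) : ℝ :=
  if wt p.1 + (p.2 : ℕ) = 1 then (if p.2 = 1 then 2 else -1) else 0

noncomputable def vvec (p : Idx 3) : ℝ :=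
  if wt p.1 + (p.2 : ℕ) = 1 then (if p.2 = 1 then 2 else -1)
  else if wt p.1 + (p.2 : ℕ) = 3 then -3 else 0

noncomputable def Cmat : Matrix (Idx 3) (Idx 3) ℂ := fun p q => ((uvec p * vvec q / 15 : ℝ) : ℂ)

noncomputable def Mmat : Matrix (Idx 3) (Idx 3) ℂ := fun p q => ((uvec p * uvec q / 15 : ℝ) : ℂ)

lemma sum_fin2fun (g : (Fin 2 → Fin 2) → ℂ) :
    ∑ x, g x = g ![0,0] + g ![0,1] + g ![1,0] + g ![1,1] := by
  rw [← Equiv.sum_comp (finTwoArrowEquiv (Fin 2)).symm g, Fintype.sum_prod_type]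
  simp [finTwoArrowEquiv, Fin.sum_univ_two]
  ring

lemma sum_idx3 (f : Idx 3 → ℂ) :
    ∑ k, f k = f (![0,0],0) + f (![0,0],1) + f (![0,1],0) + f (![0,1],1)
      + f (![1,0],0) + f (![1,0],1) + f (![1,1],0) + f (![1,1],1) := by
  rw [Fintype.sum_prod_type]
  rw [sum_fin2fun (fun x => ∑ b, f (x, b))]
  simp [Fin.sum_univ_two]
  ring

lemma idx3_ext {α : Type*} (M N : Matrix (Idx 3) (Idx 3) α)
    (H : ∀ p q : Idx 3, M p q = N p q) : M = N := by
  ext p q; exact H p q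

lemma alpha_eq (x w : Fin (3 - 1) → Fin 2) :
    alpha 3 x w = (((-1 : ℝ) ^ (∑ i, (x i : ℕ) * (w i : ℕ)) / 2 : ℝ) : ℂ) := by
  unfold alpha
  have h4 : Real.sqrt (2 ^ (3 - 1)) = 2 := by
    rw [show ((2:ℝ) ^ (3-1)) = 2 ^ 2 by norm_num, Real.sqrt_sq (by norm_num)]
  rw [h4]
  push_cast
  ring

lemma beta_eq (x : Fin (3 - 1) → Fin 2) (b : Fin 2) :
    beta 3 x b = (((if b = 1 then 1 else (2 - 2 * (wt x : ℝ))) /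
      Real.sqrt (1 + (2 - 2 * (wt x : ℝ)) ^ 2) : ℝ) : ℂ) := by
  unfold beta
  have h : (1 + ((3:ℕ) - 1 - 2 * (wt x : ℕ) : ℝ) ^ 2) = 1 + (2 - 2 * (wt x : ℝ)) ^ 2 := by
    push_cast; ring
  rw [h]
  split_ifs <;> push_cast <;> ring

lemma ab_term (x y z : Fin (3 - 1) → Fin 2) (b c : Fin 2) :
    alpha 3 x y * star (alpha 3 x z) * (beta 3 x b * star (beta 3 x c)) =
    ((((-1 : ℝ) ^ (∑ i, (x i : ℕ) * (y i : ℕ)) * (-1 : ℝ) ^ (∑ i, (x i : ℕ) * (z i : ℕ)) / 4) *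
     ((if b = 1 then 1 else (2 - 2 * (wt x : ℝ))) * (if c = 1 then 1 else (2 - 2 * (wt x : ℝ))) /
       (1 + (2 - 2 * (wt x : ℝ)) ^ 2)) : ℝ) : ℂ) := by
  rw [alpha_eq, alpha_eq, beta_eq, beta_eq]
  rw [show ∀ r : ℝ, star (r : ℂ) = ((r:ℝ):ℂ) from fun r => Complex.conj_ofReal r]
  rw [show ∀ r : ℝ, star (r : ℂ) = ((r:ℝ):ℂ) from fun r => Complex.conj_ofReal r]
  rw [← Complex.ofReal_mul, ← Complex.ofReal_mul, ← Complex.ofReal_mul]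
  congr 1
  rw [div_mul_div_comm, div_mul_div_comm, Real.mul_self_sqrt (by positivity)]
  ring

lemma projW_eq (p q : Idx 3) :
    projW 3 p q = (((if wt p.1 + (p.2 : ℕ) = 1 then 1 else 0) *
      (if wt q.1 + (q.2 : ℕ) = 1 then 1 else 0) / 3 : ℝ) : ℂ) := by
  unfold projW Wstate
  have h3 : (1 / Real.sqrt 3) * (1 / Real.sqrt 3) = 1 / 3 := by
    rw [div_mul_div_comm, one_mul, Real.mul_self_sqrt (by norm_num)]
  split_ifs with h1 h2
  · rw [show star ((1 / Real.sqrt ((3:ℕ):ℝ) : ℝ) : ℂ) = ((1 / Real.sqrt ((3:ℕ):ℝ) : ℝ) : ℂ) from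
      Complex.conj_ofReal _, ← Complex.ofReal_mul, div_mul_div_comm, one_mul,
      Real.mul_self_sqrt (by positivity)]
    norm_num
  · simp
  · simp
  · simp

lemma wt_pair (a b : Fin 2) : wt (![a, b] : Fin (3 - 1) → Fin 2) = (a : ℕ) + (b : ℕ) := by
  unfold wt
  exact (Fin.sum_univ_two fun i => ((![a, b] : Fin 2 → Fin 2) i : ℕ)).trans (by simp)

lemma vec_eq_pair (a b c d : Fin 2) :
    (![a, b] : Fin (3 - 1) → Fin 2) = ![c, d] ↔ (a = c ∧ b = d) := by
  constructor
  · intro h; exact ⟨congrFun h 0, congrFun h 1⟩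
  · rintro ⟨rfl, rfl⟩; rfl

lemma dot_pair (a b c d : Fin 2) :
    (∑ i : Fin (3 - 1), (((![a, b] : Fin (3 - 1) → Fin 2) i : ℕ) * (((![c, d] : Fin (3 - 1) → Fin 2) i : ℕ)))
      = (a : ℕ) * (c : ℕ) + (b : ℕ) * (d : ℕ)) := by
  exact (Fin.sum_univ_two fun i => (((![a, b] : Fin 2 → Fin 2) i : ℕ) * (((![c, d] : Fin 2 → Fin 2) i : ℕ)))).trans (by simp)

lemma hA : P1 3 - projW 3 = Amat := by
  apply idx3_ext
  rintro ⟨pf, pb⟩ ⟨qf, qb⟩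
  obtain ⟨a, b, rfl⟩ : ∃ a b, pf = ![a, b] := ⟨pf 0, pf 1, by funext i; fin_cases i <;> rfl⟩
  obtain ⟨c, d, rfl⟩ : ∃ c d, qf = ![c, d] := ⟨qf 0, qf 1, by funext i; fin_cases i <;> rfl⟩
  rw [Matrix.sub_apply, projW_eq]
  fin_cases a <;> fin_cases b <;> fin_cases c <;> fin_cases d <;> fin_cases pb <;> fin_cases qb <;>
    · simp only [P1, Amat, code, wt_pair, vec_eq_pair, Prod.mk.injEq,
        Matrix.cons_val_zero, Matrix.cons_val_one, Matrix.head_cons, Fin.val_zero, Fin.val_one]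
      norm_num [vec_eq_pair, Fin.ext_iff]

lemma sum_fin2fun' (g : (Fin (3 - 1) → Fin 2) → ℂ) :
    ∑ x, g x = g ![0,0] + g ![0,1] + g ![1,0] + g ![1,1] :=
  sum_fin2fun g

set_option maxHeartbeats 2000000 in
lemma hB : P2 3 - projW 3 = Bmat := by
  apply idx3_ext
  rintro ⟨pf, pb⟩ ⟨qf, qb⟩
  obtain ⟨a, b, rfl⟩ : ∃ a b, pf = ![a, b] := ⟨pf 0, pf 1, by funext i; fin_cases i <;> rfl⟩
  obtain ⟨c, d, rfl⟩ : ∃ c d, qf = ![c, d] := ⟨qf 0, qf 1, by funext i; fin_cases i <;> rfl⟩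
  rw [Matrix.sub_apply, projW_eq]
  show (∑ x : Fin (3 - 1) → Fin 2, _) - _ = _
  rw [sum_fin2fun']
  simp only [ab_term, dot_pair, wt_pair]
  fin_cases a <;> fin_cases b <;> fin_cases c <;> fin_cases d <;> fin_cases pb <;> fin_cases qb <;>
    · simp only [Bmat, code, wt_pair, dot_pair, Matrix.cons_val_zero, Matrix.cons_val_one,
        Matrix.head_cons, Fin.val_zero, Fin.val_one]
      norm_num [btab]

set_option maxHeartbeats 2000000 in
lemma hC : Amat * Bmat = Cmat := by
  apply idx3_ext
  rintro ⟨pf, pb⟩ ⟨qf, qb⟩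
  obtain ⟨a, b, rfl⟩ : ∃ a b, pf = ![a, b] := ⟨pf 0, pf 1, by funext i; fin_cases i <;> rfl⟩
  obtain ⟨c, d, rfl⟩ : ∃ c d, qf = ![c, d] := ⟨qf 0, qf 1, by funext i; fin_cases i <;> rfl⟩
  rw [Matrix.mul_apply, sum_idx3]
  fin_cases a <;> fin_cases b <;> fin_cases c <;> fin_cases d <;> fin_cases pb <;> fin_cases qb <;>
    · simp only [Amat, Bmat, Cmat, uvec, vvec, code, wt_pair, Matrix.cons_val_zero,
        Matrix.cons_val_one, Matrix.head_cons, Fin.val_zero, Fin.val_one]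
      norm_num [btab]

set_option maxHeartbeats 2000000 in
lemma hD : Cmat * Amat = Mmat := by
  apply idx3_ext
  rintro ⟨pf, pb⟩ ⟨qf, qb⟩
  obtain ⟨a, b, rfl⟩ : ∃ a b, pf = ![a, b] := ⟨pf 0, pf 1, by funext i; fin_cases i <;> rfl⟩
  obtain ⟨c, d, rfl⟩ : ∃ c d, qf = ![c, d] := ⟨qf 0, qf 1, by funext i; fin_cases i <;> rfl⟩
  rw [Matrix.mul_apply, sum_idx3]
  fin_cases a <;> fin_cases b <;> fin_cases c <;> fin_cases d <;> fin_cases pb <;> fin_cases qb <;>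
    · simp only [Amat, Cmat, Mmat, uvec, vvec, code, wt_pair, Matrix.cons_val_zero,
        Matrix.cons_val_one, Matrix.head_cons, Fin.val_zero, Fin.val_one]
      norm_num

lemma hherm : Mmatᴴ = Mmat := by
  apply idx3_ext; intro p q
  simp only [Matrix.conjTranspose_apply, Mmat, Complex.star_def, Complex.conj_ofReal]
  exact Complex.ofReal_inj.mpr (by ring)

lemma uvec_val : uvec (![0,0],0) = 0 ∧ uvec (![0,0],1) = 2 ∧ uvec (![0,1],0) = -1 ∧
    uvec (![0,1],1) = 0 ∧ uvec (![1,0],0) = -1 ∧ uvec (![1,0],1) = 0 ∧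
    uvec (![1,1],0) = 0 ∧ uvec (![1,1],1) = 0 := by
  refine ⟨?_, ?_, ?_, ?_, ?_, ?_, ?_, ?_⟩ <;> norm_num [uvec, wt_pair]

lemma hsq : Mmat * Mmat = ((2/5 : ℝ) : ℂ) • Mmat := by
  apply idx3_ext; intro p q
  rw [Matrix.mul_apply, sum_idx3]
  obtain ⟨h1, h2, h3, h4, h5, h6, h7, h8⟩ := uvec_val
  simp only [Mmat, Matrix.smul_apply, smul_eq_mul, h1, h2, h3, h4, h5, h6, h7, h8]
  push_cast
  ring

lemma hne : Mmat ≠ 0 := by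
  intro h
  have h2 : uvec (![0,0],1) = 2 := uvec_val.2.1
  have := congrFun (congrFun h (![0,0],1)) (![0,0],1)
  rw [Mmat] at this
  simp only [h2, Matrix.zero_apply] at this
  norm_num at this

theorem stmt_14 :
    ‖(P1 3 - projW 3) * (P2 3 - projW 3) * (P1 3 - projW 3)‖ = 2 / 5 := by
  rw [hA, hB, hC, hD]
  have key := Matrix.l2_opNorm_conjTranspose_mul_self Mmat
  rw [hherm, hsq, norm_smul] at key
  have hnorm : ‖((2/5 : ℝ) : ℂ)‖ = 2/5 := by
    simp [Complex.norm_real]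
  have hM0 : ‖Mmat‖ ≠ 0 := by simpa using hne
  rw [hnorm] at key
  exact ((mul_right_cancel₀ hM0 key).symm.trans rfl)
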